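/- Let A be a 2 × 2 matrix with entries in [0,1] such that each column of A has meet zero (min(A₀ⱼ, A₁ⱼ) = 0 for j = 0, 1), and let v = (x, y) ∈ [0,1]² with min(x, y) = 0. Then the vector A(v) defined by (A v)ᵢ = minⱼ min(A_{ij} + vⱼ, 1) again satisfies min((Av)₀, (Av)₁) = 0. Moreover A applied to (1,1) yields (1,1), and the all-ones matrix applied to any v ∈ S(2) yields (1,1). Hence the action of MV₂(I) preserves S(2). -/
import Mathlib


/-- The action of a `2 × 2` matrix on a vector in the semiring `([0,1], ∧, ⊕)`:
`(A v)ᵢ = ∧ⱼ min(A_{ij} + vⱼ, 1)`. -/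
def mvAct (A : Matrix (Fin 2) (Fin 2) ℝ) (v : Fin 2 → ℝ) : Fin 2 → ℝ :=
  fun i => min (min (A i 0 + v 0) 1) (min (A i 1 + v 1) 1)

/-- The action of `MV₂(I)` preserves `S(2)`: a matrix with entries in `[0,1]`
whose columns have meet zero sends a vector with entries in `[0,1]` and meet
zero to another such vector; moreover every such matrix sends `(1,1)` to
`(1,1)`, and the all-ones matrix sends every element of `S(2)` to `(1,1)`. -/
theorem mvAct_preserves_S2 (A : Matrix (Fin 2) (Fin 2) ℝ)
    (hA : ∀ i j, A i j ∈ Set.Icc (0 : ℝ) 1)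
    (hAcol : ∀ j, min (A 0 j) (A 1 j) = 0) :
    (∀ v : Fin 2 → ℝ, (∀ j, v j ∈ Set.Icc (0 : ℝ) 1) → min (v 0) (v 1) = 0 →
      min (mvAct A v 0) (mvAct A v 1) = 0) ∧
    mvAct A ![1, 1] = ![1, 1] ∧
    (∀ v : Fin 2 → ℝ, (∀ j, v j ∈ Set.Icc (0 : ℝ) 1) →
      (min (v 0) (v 1) = 0 ∨ v = ![1, 1]) →
      mvAct (Matrix.of fun _ _ => (1 : ℝ)) v = ![1, 1]) := by
  refine ⟨?_, ?_, ?_⟩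
  · intro v hv hmin
    have hnn : 0 ≤ min (mvAct A v 0) (mvAct A v 1) := by
      refine le_min ?_ ?_ <;>
        exact le_min (le_min (add_nonneg (hA _ 0).1 (hv 0).1) zero_le_one)
          (le_min (add_nonneg (hA _ 1).1 (hv 1).1) zero_le_one)
    refine le_antisymm ?_ hnn
    rcases min_eq_iff.mp hmin with ⟨h, _⟩ | ⟨h, _⟩
    · rcases min_eq_iff.mp (hAcol 0) with ⟨hA0, _⟩ | ⟨hA0, _⟩
      · calc min (mvAct A v 0) (mvAct A v 1) ≤ mvAct A v 0 := min_le_left _ _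
          _ ≤ min (A 0 0 + v 0) 1 := min_le_left _ _
          _ ≤ A 0 0 + v 0 := min_le_left _ _
          _ = 0 := by rw [hA0, h, add_zero]
      · calc min (mvAct A v 0) (mvAct A v 1) ≤ mvAct A v 1 := min_le_right _ _
          _ ≤ min (A 1 0 + v 0) 1 := min_le_left _ _
          _ ≤ A 1 0 + v 0 := min_le_left _ _
          _ = 0 := by rw [hA0, h, add_zero]
    · rcases min_eq_iff.mp (hAcol 1) with ⟨hA1, _⟩ | ⟨hA1, _⟩
      · calc min (mvAct A v 0) (mvAct A v 1) ≤ mvAct A v 0 := min_le_left _ _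
          _ ≤ min (A 0 1 + v 1) 1 := min_le_right _ _
          _ ≤ A 0 1 + v 1 := min_le_left _ _
          _ = 0 := by rw [hA1, h, add_zero]
      · calc min (mvAct A v 0) (mvAct A v 1) ≤ mvAct A v 1 := min_le_right _ _
          _ ≤ min (A 1 1 + v 1) 1 := min_le_right _ _
          _ ≤ A 1 1 + v 1 := min_le_left _ _
          _ = 0 := by rw [hA1, h, add_zero]
  · funext i
    fin_cases i <;>
      simp [mvAct, min_eq_right (le_add_of_nonneg_left (hA 0 0).1),
        min_eq_right (le_add_of_nonneg_left (hA 0 1).1),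
        min_eq_right (le_add_of_nonneg_left (hA 1 0).1),
        min_eq_right (le_add_of_nonneg_left (hA 1 1).1)]
  · intro v hv _
    funext i
    fin_cases i <;>
      simp [mvAct, min_eq_right (le_add_of_nonneg_right (hv 0).1),
        min_eq_right (le_add_of_nonneg_right (hv 1).1)]
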